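/- On a rectangular board with two or more non-bonding 1×1 tiles, the relative order of tiles in the x-coordinate is preserved under all tilts: if tile A is strictly west of tile B in the same row before a tilt in direction E or W, then after the tilt A is still strictly west of B (they cannot pass through each other), and analogously for the y-coordinate under N and S tilts. -/
import Mathlib


open scoped Classical

/-- The four cardinal directions as unit vectors: N, E, S, W. -/
def Dirs : Finset (ℤ × ℤ) := {(0,1), (1,0), (0,-1), (-1,0)}

/-- Some tile of the configuration `f` occupies position `p`. -/
def Occupied {k : ℕ} (f : Fin k → ℤ × ℤ) (p : ℤ × ℤ) : Prop := ∃ i, f i = p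

/-- A tile at position `p` can move one unit in direction `d`: there is some `j ≥ 1`
such that the cells `p + d, …, p + j·d` are open, the cells strictly before `p + j·d`
are occupied (those tiles move as well), and `p + j·d` is free. -/
def Movable {k : ℕ} (O : Finset (ℤ × ℤ)) (f : Fin k → ℤ × ℤ) (d p : ℤ × ℤ) : Prop :=
  ∃ j : ℕ, 1 ≤ j ∧ (∀ i : ℕ, 1 ≤ i → i ≤ j → p + (i : ℤ) • d ∈ O) ∧
    (∀ i : ℕ, 1 ≤ i → i < j → Occupied f (p + (i : ℤ) • d)) ∧
    ¬ Occupied f (p + (j : ℤ) • d)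

/-- One step: every movable tile advances one unit in direction `d`. -/
noncomputable def mstep {k : ℕ} (O : Finset (ℤ × ℤ)) (d : ℤ × ℤ)
    (f : Fin k → ℤ × ℤ) : Fin k → ℤ × ℤ :=
  fun i => if Movable O f d (f i) then f i + d else f i

/-- A tilt: iterate steps until no tile can move (enough iterations for a fixpoint). -/
noncomputable def mtilt {k : ℕ} (O : Finset (ℤ × ℤ)) (d : ℤ × ℤ)
    (f : Fin k → ℤ × ℤ) : Fin k → ℤ × ℤ :=
  (mstep O d)^[O.card * k + 1] f

lemma shift_eq (p d : ℤ × ℤ) (i : ℕ) : p + d + (i : ℤ) • d = p + ((i + 1 : ℕ) : ℤ) • d := by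
  push_cast
  rw [add_smul, one_smul]
  abel

lemma movable_shift {k : ℕ} (O : Finset (ℤ × ℤ)) (f : Fin k → ℤ × ℤ) (d p : ℤ × ℤ)
    (hm : Movable O f d p) (hocc : Occupied f (p + d)) : Movable O f d (p + d) := by
  obtain ⟨j, hj1, hO, hoccs, hfree⟩ := hm
  rcases Nat.lt_or_ge j 2 with hj | hj
  · have hj' : j = 1 := by omega
    subst hj'
    exact absurd (by simpa using hocc) hfree
  · refine ⟨j - 1, by omega, ?_, ?_, ?_⟩
    · intro i h1 h2
      rw [shift_eq]
      exact hO (i + 1) (by omega) (by omega)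
    · intro i h1 h2
      rw [shift_eq]
      exact hoccs (i + 1) (by omega) (by omega)
    · rw [shift_eq]
      have : j - 1 + 1 = j := by omega
      rw [this]
      exact hfree

lemma mstep_pres_x {k : ℕ} (O : Finset (ℤ × ℤ)) (f : Fin k → ℤ × ℤ) (d : ℤ × ℤ)
    (hd : d = ((1,0) : ℤ × ℤ) ∨ d = ((-1,0) : ℤ × ℤ)) (a b : Fin k)
    (h2 : (f a).2 = (f b).2) (h1 : (f a).1 < (f b).1) :
    (mstep O d f a).2 = (mstep O d f b).2 ∧ (mstep O d f a).1 < (mstep O d f b).1 := by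
  unfold mstep
  rcases hd with rfl | rfl
  · by_cases ha : Movable O f (1,0) (f a) <;> by_cases hb : Movable O f (1,0) (f b) <;>
      simp only [ha, hb, if_pos, if_neg, if_true, if_false, Prod.fst_add, Prod.snd_add]
    · exact ⟨by simpa using h2, by simpa using h1⟩
    · -- a moves, b doesn't
      refine ⟨by simpa using h2, ?_⟩
      by_contra hcon
      have heq : (f b).1 = (f a).1 + 1 := by simp at hcon; omega
      have hfb : f b = f a + (1,0) := by
        apply Prod.ext <;> simp [heq, h2.symm]
      exact hb (hfb ▸ movable_shift O f (1,0) (f a) ha ⟨b, hfb⟩)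
    · exact ⟨by simpa using h2, by omega⟩
    · exact ⟨h2, h1⟩
  · by_cases ha : Movable O f (-1,0) (f a) <;> by_cases hb : Movable O f (-1,0) (f b) <;>
      simp only [ha, hb, if_pos, if_neg, if_true, if_false, Prod.fst_add, Prod.snd_add]
    · exact ⟨by simpa using h2, by simpa using h1⟩
    · exact ⟨by simpa using h2, by simp; omega⟩
    · -- b moves, a doesn't
      refine ⟨by simpa using h2, ?_⟩
      by_contra hcon
      have heq : (f a).1 = (f b).1 + -1 := by push_neg at hcon; omega
      have hfa : f a = f b + (-1,0) := by
        apply Prod.ext <;> simp [heq, h2]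
      exact ha (hfa ▸ movable_shift O f (-1,0) (f b) hb ⟨a, hfa⟩)
    · exact ⟨h2, h1⟩

lemma mstep_pres_y {k : ℕ} (O : Finset (ℤ × ℤ)) (f : Fin k → ℤ × ℤ) (d : ℤ × ℤ)
    (hd : d = ((0,1) : ℤ × ℤ) ∨ d = ((0,-1) : ℤ × ℤ)) (a b : Fin k)
    (h2 : (f a).1 = (f b).1) (h1 : (f a).2 < (f b).2) :
    (mstep O d f a).1 = (mstep O d f b).1 ∧ (mstep O d f a).2 < (mstep O d f b).2 := by
  unfold mstep
  rcases hd with rfl | rfl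
  · by_cases ha : Movable O f (0,1) (f a) <;> by_cases hb : Movable O f (0,1) (f b) <;>
      simp only [ha, hb, if_pos, if_neg, if_true, if_false, Prod.fst_add, Prod.snd_add]
    · exact ⟨by simpa using h2, by simpa using h1⟩
    · refine ⟨by simpa using h2, ?_⟩
      by_contra hcon
      have heq : (f b).2 = (f a).2 + 1 := by simp at hcon; omega
      have hfb : f b = f a + (0,1) := by
        apply Prod.ext <;> simp [heq, h2.symm]
      exact hb (hfb ▸ movable_shift O f (0,1) (f a) ha ⟨b, hfb⟩)
    · exact ⟨by simpa using h2, by omega⟩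
    · exact ⟨h2, h1⟩
  · by_cases ha : Movable O f (0,-1) (f a) <;> by_cases hb : Movable O f (0,-1) (f b) <;>
      simp only [ha, hb, if_pos, if_neg, if_true, if_false, Prod.fst_add, Prod.snd_add]
    · exact ⟨by simpa using h2, by simpa using h1⟩
    · exact ⟨by simpa using h2, by simp; omega⟩
    · refine ⟨by simpa using h2, ?_⟩
      by_contra hcon
      have heq : (f a).2 = (f b).2 + -1 := by push_neg at hcon; omega
      have hfa : f a = f b + (0,-1) := by
        apply Prod.ext <;> simp [heq, h2]
      exact ha (hfa ▸ movable_shift O f (0,-1) (f b) hb ⟨a, hfa⟩)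
    · exact ⟨h2, h1⟩

lemma iter_pres_x {k : ℕ} (O : Finset (ℤ × ℤ)) (f : Fin k → ℤ × ℤ) (d : ℤ × ℤ)
    (hd : d = ((1,0) : ℤ × ℤ) ∨ d = ((-1,0) : ℤ × ℤ)) (a b : Fin k)
    (h2 : (f a).2 = (f b).2) (h1 : (f a).1 < (f b).1) (N : ℕ) :
    ((mstep O d)^[N] f a).2 = ((mstep O d)^[N] f b).2 ∧
      ((mstep O d)^[N] f a).1 < ((mstep O d)^[N] f b).1 := by
  induction N with
  | zero => exact ⟨h2, h1⟩
  | succ N ih =>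
    rw [Function.iterate_succ_apply']
    exact mstep_pres_x O _ d hd a b ih.1 ih.2

lemma iter_pres_y {k : ℕ} (O : Finset (ℤ × ℤ)) (f : Fin k → ℤ × ℤ) (d : ℤ × ℤ)
    (hd : d = ((0,1) : ℤ × ℤ) ∨ d = ((0,-1) : ℤ × ℤ)) (a b : Fin k)
    (h2 : (f a).1 = (f b).1) (h1 : (f a).2 < (f b).2) (N : ℕ) :
    ((mstep O d)^[N] f a).1 = ((mstep O d)^[N] f b).1 ∧
      ((mstep O d)^[N] f a).2 < ((mstep O d)^[N] f b).2 := by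
  induction N with
  | zero => exact ⟨h2, h1⟩
  | succ N ih =>
    rw [Function.iterate_succ_apply']
    exact mstep_pres_y O _ d hd a b ih.1 ih.2

/-- on a rectangular board, non-bonding 1×1 tiles cannot pass through
each other: horizontal tilts preserve the strict west-of order within a row, and
vertical tilts preserve the strict south-of order within a column. -/
theorem tilt_preserves_order (m n : ℕ) (k : ℕ) (f : Fin k → ℤ × ℤ)
    (hinj : Function.Injective f)
    (hin : ∀ i, f i ∈ Finset.Icc (1:ℤ) (m:ℤ) ×ˢ Finset.Icc (1:ℤ) (n:ℤ))
    (d : ℤ × ℤ) :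
    let O : Finset (ℤ × ℤ) := Finset.Icc (1:ℤ) (m:ℤ) ×ˢ Finset.Icc (1:ℤ) (n:ℤ)
    ((d = ((1,0) : ℤ × ℤ) ∨ d = ((-1,0) : ℤ × ℤ)) →
      ∀ a b : Fin k, (f a).2 = (f b).2 → (f a).1 < (f b).1 →
        (mtilt O d f a).1 < (mtilt O d f b).1) ∧
    ((d = ((0,1) : ℤ × ℤ) ∨ d = ((0,-1) : ℤ × ℤ)) →
      ∀ a b : Fin k, (f a).1 = (f b).1 → (f a).2 < (f b).2 →
        (mtilt O d f a).2 < (mtilt O d f b).2) := by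
  intro O
  constructor
  · intro hd a b h2 h1
    exact (iter_pres_x O f d hd a b h2 h1 (O.card * k + 1)).2
  · intro hd a b h2 h1
    exact (iter_pres_y O f d hd a b h2 h1 (O.card * k + 1)).2
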